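/- Let N be a norm on a real vector space V and let u, v ∈ V be linearly independent vectors such that N(a • u + b • v) = a * N(u) + b * N(v) for all reals a, b ≥ 0. Then the point (N(u + v))⁻¹ • (u + v) is not an extreme point of the closed unit ball {x : N(x) ≤ 1}. -/

import Mathlib

theorem not_extreme_of_additive_cone
    {V : Type*} [NormedAddCommGroup V] [NormedSpace ℝ V]
    (u v : V) (hli : LinearIndependent ℝ ![u, v])
    (hadd : ∀ a b : ℝ, 0 ≤ a → 0 ≤ b → ‖a • u + b • v‖ = a * ‖u‖ + b * ‖v‖) :
    (‖u + v‖)⁻¹ • (u + v) ∉ Set.extremePoints ℝ {x : V | ‖x‖ ≤ 1} := by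
  intro hext
  have hu0 : u ≠ 0 := by simpa using hli.ne_zero 0
  have hv0 : v ≠ 0 := by simpa using hli.ne_zero 1
  have hu : (0:ℝ) < ‖u‖ := norm_pos_iff.mpr hu0
  have hv : (0:ℝ) < ‖v‖ := norm_pos_iff.mpr hv0
  have hsum : ‖u + v‖ = ‖u‖ + ‖v‖ := by
    have := hadd 1 1 zero_le_one zero_le_one
    simpa using this
  have hs : (0:ℝ) < ‖u + v‖ := by rw [hsum]; positivity
  set x := ‖u‖⁻¹ • u with hxdef
  set y := ‖v‖⁻¹ • v with hydef
  have hxmem : x ∈ {x : V | ‖x‖ ≤ 1} := by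
    simp only [Set.mem_setOf_eq, hxdef, norm_smul, Real.norm_eq_abs,
      abs_of_pos (inv_pos.mpr hu)]
    rw [inv_mul_cancel₀ hu.ne']
  have hymem : y ∈ {x : V | ‖x‖ ≤ 1} := by
    simp only [Set.mem_setOf_eq, hydef, norm_smul, Real.norm_eq_abs,
      abs_of_pos (inv_pos.mpr hv)]
    rw [inv_mul_cancel₀ hv.ne']
  have hxy : x ≠ y := by
    intro h
    have hzero : ‖u‖⁻¹ • u + (-‖v‖⁻¹) • v = 0 := by
      rw [neg_smul, ← hxdef, ← hydef, h]
      abel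
    have := (LinearIndependent.pair_iff.mp hli ‖u‖⁻¹ (-‖v‖⁻¹) hzero).1
    exact (inv_pos.mpr hu).ne' this
  have hmem : (‖u + v‖)⁻¹ • (u + v) ∈ openSegment ℝ x y := by
    refine ⟨‖u‖ / ‖u + v‖, ‖v‖ / ‖u + v‖, div_pos hu hs, div_pos hv hs, ?_, ?_⟩
    · field_simp [hsum]
      exact hsum.symm
    · rw [hxdef, hydef, smul_smul, smul_smul]
      rw [div_mul_eq_mul_div, mul_inv_cancel₀ hu.ne',
        div_mul_eq_mul_div, mul_inv_cancel₀ hv.ne']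
      rw [smul_add]
      norm_num [one_div]
  obtain ⟨h1, h2⟩ := (mem_extremePoints.mp hext).2 _ hxmem _ hymem hmem
  exact hxy (h1.trans h2.symm)
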